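/- Let a > 1, d ≥ 1, and 0 ≤ i < d. For the division transducer in base a by d (transitions i →(b/c) j iff i·a + b = c·d + j with digits b, c ∈ {0,…,a−1} and states in {0,…,d−1}), the relation realized by paths from state 0 to state r (0 ≤ r < d) is exactly { (u, v) : |u| = |v| and [u] = [v]·d + r }, where [w] is the base-a value of w with most significant digit first. -/

import Mathlib

/-- Path of the division-by-`d` transducer in base `a`. -/
def DivPath (a d : ℕ) : ℕ → List ℕ → List ℕ → ℕ → Prop
  | i, [], [], j => i = j
  | i, b :: u, c :: v, j => ∃ k, i * a + b = c * d + k ∧ DivPath a d k u v j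
  | _, _, _, _ => False

/-- Base-`a` value, most significant digit first. -/
def msbVal (a : ℕ) : List ℕ → ℕ
  | [] => 0
  | c :: w => c * a ^ w.length + msbVal a w

lemma msbVal_lt (a : ℕ) (ha : 1 < a) : ∀ w : List ℕ, (∀ x ∈ w, x < a) →
    msbVal a w < a ^ w.length := by
  intro w
  induction w with
  | nil => intro _; simpa [msbVal] using Nat.one_pos.trans ha |>.le.lt_of_ne (by positivity).symm
  | cons c w ih =>
    intro h
    have hc : c < a := h c (by simp)
    have hw := ih (fun x hx => h x (by simp [hx]))
    have : c * a ^ w.length + msbVal a w < (c + 1) * a ^ w.length := by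
      nlinarith [pow_pos (Nat.lt_of_lt_of_le Nat.zero_lt_one ha.le) w.length]
    calc msbVal a (c :: w) = c * a ^ w.length + msbVal a w := rfl
      _ < (c + 1) * a ^ w.length := this
      _ ≤ a * a ^ w.length := by
          exact Nat.mul_le_mul_right _ hc
      _ = a ^ (c :: w).length := by rw [List.length_cons, pow_succ]; ring

lemma divPath_forward (a d : ℕ) : ∀ (u v : List ℕ) (i j : ℕ),
    DivPath a d i u v j →
    u.length = v.length ∧ i * a ^ u.length + msbVal a u = msbVal a v * d + j := by
  intro u
  induction u with
  | nil =>
    intro v i j h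
    cases v with
    | nil => simp [DivPath] at h; simp [msbVal, h]
    | cons c v => exact absurd h (by simp [DivPath])
  | cons b u ih =>
    intro v i j h
    cases v with
    | nil => exact absurd h (by simp [DivPath])
    | cons c v =>
      obtain ⟨k, hk, hpath⟩ := h
      obtain ⟨hlen, heq⟩ := ih v k j hpath
      constructor
      · simp [hlen]
      · simp only [msbVal, List.length_cons, pow_succ, hlen]
        rw [hlen] at heq
        have hk' : (i * a + b) * a ^ v.length = (c * d + k) * a ^ v.length := by rw [hk]
        nlinarith [hk', heq]

lemma divPath_backward (a d : ℕ) (ha : 1 < a) : ∀ (u v : List ℕ) (i j : ℕ),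
    i < d → j < d → (∀ x ∈ u, x < a) → (∀ x ∈ v, x < a) →
    u.length = v.length →
    i * a ^ u.length + msbVal a u = msbVal a v * d + j →
    DivPath a d i u v j := by
  intro u
  induction u with
  | nil =>
    intro v i j hi hj hu hv hlen heq
    cases v with
    | nil => simp [msbVal] at heq; simpa [DivPath] using heq
    | cons c v => simp at hlen
  | cons b u ih =>
    intro v i j hi hj hu hv hlen heq
    cases v with
    | nil => simp at hlen
    | cons c v =>
      simp only [List.length_cons, Nat.add_right_cancel_iff] at hlen
      have hb : b < a := hu b (by simp)
      have hc : c < a := hv c (by simp)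
      have hu' : ∀ x ∈ u, x < a := fun x hx => hu x (by simp [hx])
      have hv' : ∀ x ∈ v, x < a := fun x hx => hv x (by simp [hx])
      have hub := msbVal_lt a ha u hu'
      have hvb := msbVal_lt a ha v hv'
      have hpow : 0 < a ^ u.length := pow_pos (Nat.lt_of_lt_of_le Nat.zero_lt_one ha.le) _
      simp only [msbVal, List.length_cons, pow_succ, hlen] at heq
      rw [← hlen] at heq hvb
      -- heq : i * (a ^ u.length * a) + (b * a ^ u.length + msbVal a u)
      --     = (c * a ^ u.length + msbVal a v) * d + j
      have key : (i * a + b) * a ^ u.length + msbVal a u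
          = (c * d) * a ^ u.length + (msbVal a v * d + j) := by ring_nf; ring_nf at heq; linarith
      have hge : c * d ≤ i * a + b := by
        by_contra hlt
        push_neg at hlt
        have h1 : i * a + b + 1 ≤ c * d := hlt
        nlinarith
      set k := i * a + b - c * d with hkdef
      have hk : i * a + b = c * d + k := by omega
      have keq : k * a ^ u.length + msbVal a u = msbVal a v * d + j := by
        have : (c * d + k) * a ^ u.length + msbVal a u
            = (c * d) * a ^ u.length + (msbVal a v * d + j) := by rw [← hk]; exact key
        nlinarith [this]
      have h2 : k * a ^ u.length ≤ msbVal a v * d + j :=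
        le_trans (Nat.le_add_right _ _) keq.le
      have h3 : msbVal a v * d + j < a ^ u.length * d := by
        calc msbVal a v * d + j < msbVal a v * d + d := by omega
          _ = (msbVal a v + 1) * d := by ring
          _ ≤ a ^ u.length * d := Nat.mul_le_mul_right d hvb
      have h4 : k * a ^ u.length < d * a ^ u.length := by
        rw [mul_comm d]; exact lt_of_le_of_lt h2 h3
      have hkd : k < d := Nat.lt_of_mul_lt_mul_right h4
      exact ⟨k, hk, ih v k j hkd hj hu' hv' hlen keq⟩

theorem divPath_from_zero_iff (a d r : ℕ) (ha : 1 < a) (hd : 1 ≤ d) (hr : r < d)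
    (u v : List ℕ) (hu : ∀ x ∈ u, x < a) (hv : ∀ x ∈ v, x < a) :
    DivPath a d 0 u v r ↔ u.length = v.length ∧ msbVal a u = msbVal a v * d + r := by
  constructor
  · intro h
    have := divPath_forward a d u v 0 r h
    simpa using this
  · rintro ⟨hlen, heq⟩
    exact divPath_backward a d ha u v 0 r hd hr hu hv hlen (by simpa using heq)
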